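/- arXiv:1906.06544 — 2 statements merged into one kernel-verified Lean document; each statement's English description precedes it below -/
import Mathlib

section
/- In Case b2), for every ν = (ν^X,ν^Y) ∈ (ℝ^m)² with ν^X_i = ν^Y_i = 0 for all i ∉ I, one has 𝔪(ν) = Σ_{i∈I} ( (s/p^X_i) ν^X_i + (t/p^Y_i) ν^Y_i ), where (s,t) is the unique pair of reals with s/p^X_i + t/p^Y_i = 1 for all i ∈ I. -/
open MeasureTheory ProbabilityTheory Filter Finset Topology

noncomputable section

attribute [local instance] Classical.propDecidable

/-- The simplex `Λ` of probability vectors on `{1,…,m}`. -/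
def Lam (m : ℕ) : Set (Fin m → ℝ) := {l | (∀ i, 0 ≤ l i) ∧ ∑ i, l i = 1}

/-- `f(λ^X, λ^Y) = Σ_i min (p^X_i λ^X_i) (p^Y_i λ^Y_i)`. -/
def fobj {m : ℕ} (pX pY : Fin m → ℝ) (l : (Fin m → ℝ) × (Fin m → ℝ)) : ℝ :=
  ∑ i, min (pX i * l.1 i) (pY i * l.2 i)

/-- `e_max`, the maximum of `f` over `Λ²`. -/
def emax {m : ℕ} (pX pY : Fin m → ℝ) : ℝ :=
  sSup (fobj pX pY '' (Lam m ×ˢ Lam m))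

/-- The set `U`. -/
def Uset {m : ℕ} (pX pY : Fin m → ℝ) : Set (Fin m → ℝ) :=
  {u | (∀ i, 0 ≤ u i) ∧ (∑ i, u i / pX i) ≤ 1 ∧ (∑ i, u i / pY i) ≤ 1}

/-- The set `L_U` of maximizers of `φ(u) = Σ_i u_i` over `U`. -/
def LU {m : ℕ} (pX pY : Fin m → ℝ) : Set (Fin m → ℝ) :=
  {u ∈ Uset pX pY | ∑ i, u i = emax pX pY}

/-- The set `I` of letters usable in a maximizer. -/
def Iset {m : ℕ} (pX pY : Fin m → ℝ) : Set (Fin m) :=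
  {i | ∃ u ∈ LU pX pY, 0 < u i}

/-- Case a): some maximizer saturates the `X` constraint but not the `Y` one. -/
def CaseA {m : ℕ} (pX pY : Fin m → ℝ) : Prop :=
  ∃ u ∈ LU pX pY, (∑ i, u i / pX i) = 1 ∧ (∑ i, u i / pY i) < 1

/-- Case b): every maximizer saturates both constraints. -/
def CaseB {m : ℕ} (pX pY : Fin m → ℝ) : Prop :=
  ∀ u ∈ LU pX pY, (∑ i, u i / pX i) = 1 ∧ (∑ i, u i / pY i) = 1

/-- Case b1): Case b) and the vectors `(1/p^X_i)_{i∈I}` and `(1/p^Y_i)_{i∈I}` coincide. -/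
def CaseB1 {m : ℕ} (pX pY : Fin m → ℝ) : Prop :=
  CaseB pX pY ∧ ∀ i ∈ Iset pX pY, (pX i)⁻¹ = (pY i)⁻¹

/-- Case b2): Case b) and the vectors `(1/p^X_i)_{i∈I}` and `(1/p^Y_i)_{i∈I}` differ. -/
def CaseB2 {m : ℕ} (pX pY : Fin m → ℝ) : Prop :=
  CaseB pX pY ∧ ¬ (∀ i ∈ Iset pX pY, (pX i)⁻¹ = (pY i)⁻¹)

/-- The set `K_{Λ²}` of maximizers of `f` over `Λ²`. -/
def Kset {m : ℕ} (pX pY : Fin m → ℝ) : Set ((Fin m → ℝ) × (Fin m → ℝ)) :=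
  {l ∈ Lam m ×ˢ Lam m | fobj pX pY l = emax pX pY}

/-- `p^X_max`. -/
def pXmax {m : ℕ} (pX : Fin m → ℝ) : ℝ := ⨆ i, pX i

/-- The set `J` (Case a)). -/
def Jset {m : ℕ} (pX pY : Fin m → ℝ) : Set (Fin m → ℝ) :=
  {l ∈ Lam m | (∀ i ∉ Iset pX pY, l i = 0) ∧
    (∑ i ∈ Finset.univ.filter (· ∈ Iset pX pY), l i / pY i) ≤ 1 / pXmax pX}

/-- `E = {x : Σ_i x_i = 0}`. -/
def Eset (m : ℕ) : Set (Fin m → ℝ) := {x | ∑ i, x i = 0}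

/-- `E' = {x ∈ E : x_i ≥ 0 for i ∉ I}`. -/
def E'set {m : ℕ} (pX pY : Fin m → ℝ) : Set (Fin m → ℝ) :=
  {x ∈ Eset m | ∀ i ∉ Iset pX pY, 0 ≤ x i}

/-- The function `𝔪` of Lemma 1.4. -/
def mfrak {m : ℕ} (pX pY : Fin m → ℝ) (ν : (Fin m → ℝ) × (Fin m → ℝ)) : ℝ :=
  sSup ((fun x : (Fin m → ℝ) × (Fin m → ℝ) =>
      ∑ i, min (pX i * x.1 i + ν.1 i) (pY i * x.2 i + ν.2 i)) ''
    (E'set pX pY ×ˢ E'set pX pY))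

/-- Partial sum `λ_1 + … + λ_i`. -/
def psumLe {m : ℕ} (l : Fin m → ℝ) (i : Fin m) : ℝ :=
  ∑ j ∈ Finset.univ.filter (· ≤ i), l j

/-- Partial sum `λ_1 + … + λ_{i-1}`. -/
def psumLt {m : ℕ} (l : Fin m → ℝ) (i : Fin m) : ℝ :=
  ∑ j ∈ Finset.univ.filter (· < i), l j

/-- `e(i,j)`. -/
def eij {m : ℕ} (pX pY : Fin m → ℝ) (i j : Fin m) : ℝ :=
  (pX i * pY i * (pX j - pY j) + pX j * pY j * (pY i - pX i)) /
    (pY i * pX j - pX i * pY j)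

/-- The set `S` of admissible pairs `(i,j)` in the representation of `e_max`. -/
def Sset {m : ℕ} (pX pY : Fin m → ℝ) : Set (Fin m × Fin m) :=
  {ij | pX ij.1 < pX ij.2 ∧ pY ij.2 < pY ij.1 ∧ pX ij.1 < pY ij.1 ∧ pY ij.2 < pX ij.2}

/-- `e_1 = max_i min(p^X_i, p^Y_i)`. -/
def e1 {m : ℕ} (pX pY : Fin m → ℝ) : ℝ := ⨆ i, min (pX i) (pY i)

/-- `e_2 = max_{(i,j)∈S} e(i,j)` (with `sSup ∅ = 0` when `S` is empty). -/
def e2 {m : ℕ} (pX pY : Fin m → ℝ) : ℝ :=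
  sSup ((fun ij : Fin m × Fin m => eij pX pY ij.1 ij.2) '' Sset pX pY)

lemma fobj_le_one {m : ℕ} (pX pY : Fin m → ℝ)
    (hpX : ∀ i, 0 < pX i) (hpXsum : ∑ i, pX i = 1)
    (l : (Fin m → ℝ) × (Fin m → ℝ)) (hl : l ∈ Lam m ×ˢ Lam m) :
    fobj pX pY l ≤ 1 := by
  obtain ⟨⟨hl1, hl1s⟩, hl2⟩ := hl
  calc fobj pX pY l ≤ ∑ i, pX i * l.1 i := by
        refine Finset.sum_le_sum fun i _ => min_le_left _ _
    _ ≤ ∑ i, l.1 i := by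
        refine Finset.sum_le_sum fun i _ => ?_
        have hple : pX i ≤ 1 := by
          have := Finset.single_le_sum (f := pX) (fun j _ => (hpX j).le)
            (Finset.mem_univ i)
          linarith [hpXsum]
        nlinarith [hl1 i, hpX i]
    _ = 1 := hl1s

lemma sum_le_emax {m : ℕ} (hm : 0 < m) (pX pY : Fin m → ℝ)
    (hpX : ∀ i, 0 < pX i) (hpY : ∀ i, 0 < pY i)
    (hpXsum : ∑ i, pX i = 1)
    (u : Fin m → ℝ) (hu : u ∈ Uset pX pY) :
    ∑ i, u i ≤ emax pX pY := by
  obtain ⟨hu0, huX, huY⟩ := hu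
  set i0 : Fin m := ⟨0, hm⟩ with hi0
  set lX : Fin m → ℝ :=
    fun i => u i / pX i + (if i = i0 then 1 - ∑ j, u j / pX j else 0) with hlX
  set lY : Fin m → ℝ :=
    fun i => u i / pY i + (if i = i0 then 1 - ∑ j, u j / pY j else 0) with hlY
  have hmemX : lX ∈ Lam m := by
    constructor
    · intro i
      have h1 : 0 ≤ u i / pX i := div_nonneg (hu0 i) (hpX i).le
      have h2 : 0 ≤ u i0 / pX i0 := div_nonneg (hu0 i0) (hpX i0).le
      by_cases h : i = i0
      · simp only [hlX, h, if_pos rfl, if_true]; linarith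
      · simp only [hlX, if_neg h]; linarith
    · simp only [hlX, Finset.sum_add_distrib, Finset.sum_ite_eq',
        Finset.mem_univ, if_true]
      ring
  have hmemY : lY ∈ Lam m := by
    constructor
    · intro i
      have h1 : 0 ≤ u i / pY i := div_nonneg (hu0 i) (hpY i).le
      have h2 : 0 ≤ u i0 / pY i0 := div_nonneg (hu0 i0) (hpY i0).le
      by_cases h : i = i0
      · simp only [hlY, h, if_pos rfl, if_true]; linarith
      · simp only [hlY, if_neg h]; linarith
    · simp only [hlY, Finset.sum_add_distrib, Finset.sum_ite_eq',
        Finset.mem_univ, if_true]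
      ring
  have hle : ∑ i, u i ≤ fobj pX pY (lX, lY) := by
    refine Finset.sum_le_sum fun i _ => ?_
    have hX : u i ≤ pX i * lX i := by
      have h1 : u i / pX i ≤ lX i := by
        by_cases h : i = i0 <;> simp [hlX, h] <;> linarith
      have hne := (hpX i).ne'
      calc u i = pX i * (u i / pX i) := by field_simp
        _ ≤ pX i * lX i := by nlinarith [hpX i]
    have hY : u i ≤ pY i * lY i := by
      have h1 : u i / pY i ≤ lY i := by
        by_cases h : i = i0 <;> simp [hlY, h] <;> linarith
      have hne := (hpY i).ne'
      calc u i = pY i * (u i / pY i) := by field_simp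
        _ ≤ pY i * lY i := by nlinarith [hpY i]
    exact le_min hX hY
  refine hle.trans ?_
  refine le_csSup ⟨1, ?_⟩ ?_
  · rintro y ⟨l, hl, rfl⟩
    exact fobj_le_one pX pY hpX hpXsum l hl
  · exact ⟨(lX, lY), ⟨hmemX, hmemY⟩, rfl⟩

lemma solve2x2_fst (pa pb qa qb a b : ℝ) (h1 : pa ≠ 0) (h2 : pb ≠ 0)
    (h5 : pb * qa - pa * qb ≠ 0) :
    (pa * qa * (a * pb - b * qb) / (pb * qa - pa * qb)) / pa
      + (pb * qb * (b * qa - a * pa) / (pb * qa - pa * qb)) / pb = a := by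
  field_simp
  have h6 : qa * pb - qb * pa ≠ 0 := by contrapose! h5; linarith
  field_simp
  ring

lemma solve2x2_snd (pa pb qa qb a b : ℝ) (h3 : qa ≠ 0) (h4 : qb ≠ 0)
    (h5 : pb * qa - pa * qb ≠ 0) :
    (pa * qa * (a * pb - b * qb) / (pb * qa - pa * qb)) / qa
      + (pb * qb * (b * qa - a * pa) / (pb * qa - pa * qb)) / qb = b := by
  field_simp
  have h6 : -(pa * qb) + pb * qa ≠ 0 := by contrapose! h5; linarith
  field_simp
  ring

lemma solveC (pa pb qa qb C : ℝ) (h3 : qa ≠ 0) (h4 : qb ≠ 0)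
    (h5 : pa * qb - pb * qa ≠ 0) :
    pa * (C * qa * qb / (pa * qb - pb * qa)) / qa
      + pb * (-(C * qa * qb / (pa * qb - pb * qa))) / qb = C := by
  field_simp
  have h6 : pa * qb - qa * pb ≠ 0 := by contrapose! h5; linarith
  field_simp
  ring

set_option maxHeartbeats 1000000 in
/-- **Lemma 1.4, Case b2)**: for the (unique) pair `(s,t)` with `s/p^X_i + t/p^Y_i = 1`
for all `i ∈ I`, one has `𝔪(ν) = Σ_{i∈I} (s/p^X_i) ν^X_i + (t/p^Y_i) ν^Y_i`. -/
theorem mfrak_caseB2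
    (m : ℕ) (hm : 2 ≤ m)
    (pX pY : Fin m → ℝ)
    (hpX : ∀ i, 0 < pX i) (hpY : ∀ i, 0 < pY i)
    (hpXsum : ∑ i, pX i = 1) (hpYsum : ∑ i, pY i = 1)
    (hCaseB2 : CaseB2 pX pY)
    (s t : ℝ) (hst : ∀ i ∈ Iset pX pY, s / pX i + t / pY i = 1)
    (ν : (Fin m → ℝ) × (Fin m → ℝ))
    (hν : ∀ i ∉ Iset pX pY, ν.1 i = 0 ∧ ν.2 i = 0) :
    mfrak pX pY ν =
      ∑ i ∈ Finset.univ.filter (· ∈ Iset pX pY),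
        (s / pX i * ν.1 i + t / pY i * ν.2 i) := by
  classical
  obtain ⟨hB, hNot⟩ := hCaseB2
  have hm0 : 0 < m := by omega
  have hpX0 : ∀ i, pX i ≠ 0 := fun i => (hpX i).ne'
  have hpY0 : ∀ i, pY i ≠ 0 := fun i => (hpY i).ne'
  push_neg at hNot
  obtain ⟨i1, hi1I, hi1ne⟩ := hNot
  have hi1ne' : pX i1 ≠ pY i1 := fun h => hi1ne (by rw [h])
  -- every element of LU vanishes off I
  have hLUsupp : ∀ u ∈ LU pX pY, ∀ i ∉ Iset pX pY, u i = 0 := by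
    intro u hu i hi
    by_contra h
    exact hi ⟨u, hu, lt_of_le_of_ne (hu.1.1 i) (Ne.symm h)⟩
  obtain ⟨u1, hu1, hu1pos⟩ := id hi1I
  -- existence of j1 ∈ I with different cross ratio
  have hj1ex : ∃ j1 ∈ Iset pX pY, pX i1 * pY j1 ≠ pX j1 * pY i1 := by
    by_contra hcon
    push_neg at hcon
    have h1 : (∑ i, u1 i / pX i) = 1 := (hB u1 hu1).1
    have h2 : (∑ i, u1 i / pY i) = 1 := (hB u1 hu1).2
    have key : ∑ i, u1 i / pX i = (pY i1 / pX i1) * ∑ i, u1 i / pY i := by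
      rw [Finset.mul_sum]
      refine Finset.sum_congr rfl fun j _ => ?_
      by_cases hj : j ∈ Iset pX pY
      · have hcr := hcon j hj
        have h3 := hpX0 j
        have h4 := hpY0 j
        have h5 := hpX0 i1
        field_simp
        linear_combination u1 j * hcr
      · rw [hLUsupp u1 hu1 j hj]; ring
    rw [h1, h2, mul_one] at key
    rw [eq_comm, div_eq_one_iff_eq (hpX0 i1)] at key
    exact hi1ne' key.symm
  obtain ⟨j1, hj1I, hdet⟩ := hj1ex
  have hj1ne : j1 ≠ i1 := by
    intro h; subst h; exact hdet (by ring)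
  have hD : pX j1 * pY i1 - pX i1 * pY j1 ≠ 0 :=
    sub_ne_zero.mpr (fun h => hdet (by linarith [h]))
  -- the averaged maximizer ub
  set IF := Finset.univ.filter (· ∈ Iset pX pY) with hIF
  have hmemIF : ∀ i, i ∈ Iset pX pY → i ∈ IF := fun i hi =>
    Finset.mem_filter.mpr ⟨Finset.mem_univ i, hi⟩
  have hi1IF : i1 ∈ IF := hmemIF i1 hi1I
  have hIFne : IF.Nonempty := ⟨i1, hi1IF⟩
  have hch : ∀ i ∈ IF, ∃ u, u ∈ LU pX pY ∧ 0 < u i := by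
    intro i hi
    simp only [hIF, Finset.mem_filter] at hi
    obtain ⟨u, hu, h⟩ := hi.2
    exact ⟨u, hu, h⟩
  choose! W hWLU hWpos using hch
  have hcard : (0:ℝ) < (IF.card : ℝ) := by
    exact_mod_cast Finset.card_pos.mpr hIFne
  have hcardinv : (0:ℝ) < (IF.card : ℝ)⁻¹ := inv_pos.mpr hcard
  set ub : Fin m → ℝ := fun j => (IF.card : ℝ)⁻¹ * ∑ i ∈ IF, W i j with hubdef
  have hub0 : ∀ j, 0 ≤ ub j := by
    intro j
    refine mul_nonneg hcardinv.le (Finset.sum_nonneg fun i hi => ?_)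
    exact (hWLU i hi).1.1 j
  have hubX : (∑ j, ub j / pX j) = 1 := by
    have : ∀ j, ub j / pX j = (IF.card : ℝ)⁻¹ * ∑ i ∈ IF, W i j / pX j := by
      intro j
      rw [show ub j = (IF.card : ℝ)⁻¹ * ∑ i ∈ IF, W i j from rfl,
        mul_div_assoc, Finset.sum_div]
    simp_rw [this]
    rw [← Finset.mul_sum, Finset.sum_comm]
    have : ∀ i ∈ IF, (∑ j, W i j / pX j) = 1 := fun i hi => (hB (W i) (hWLU i hi)).1
    rw [Finset.sum_congr rfl this, Finset.sum_const, nsmul_eq_mul]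
    field_simp
  have hubY : (∑ j, ub j / pY j) = 1 := by
    have : ∀ j, ub j / pY j = (IF.card : ℝ)⁻¹ * ∑ i ∈ IF, W i j / pY j := by
      intro j
      rw [show ub j = (IF.card : ℝ)⁻¹ * ∑ i ∈ IF, W i j from rfl,
        mul_div_assoc, Finset.sum_div]
    simp_rw [this]
    rw [← Finset.mul_sum, Finset.sum_comm]
    have : ∀ i ∈ IF, (∑ j, W i j / pY j) = 1 := fun i hi => (hB (W i) (hWLU i hi)).2
    rw [Finset.sum_congr rfl this, Finset.sum_const, nsmul_eq_mul]
    field_simp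
  have hubsum : (∑ j, ub j) = emax pX pY := by
    have h0 : (∑ j, ub j) = (IF.card : ℝ)⁻¹ * ∑ j, ∑ i ∈ IF, W i j :=
      Finset.mul_sum _ _ _ |>.symm
    rw [h0, Finset.sum_comm]
    have : ∀ i ∈ IF, (∑ j, W i j) = emax pX pY := fun i hi => (hWLU i hi).2
    rw [Finset.sum_congr rfl this, Finset.sum_const, nsmul_eq_mul]
    field_simp
  have hubpos : ∀ i ∈ IF, 0 < ub i := by
    intro i hi
    refine mul_pos hcardinv ?_
    refine Finset.sum_pos' (fun k hk => (hWLU k hk).1.1 i) ⟨i, hi, hWpos i hi⟩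
  -- perturbation lemma
  have P : ∀ v : Fin m → ℝ, (∀ i ∉ Iset pX pY, 0 ≤ v i) →
      (∑ i, v i / pX i) ≤ 0 → (∑ i, v i / pY i) ≤ 0 → (∑ i, v i) ≤ 0 := by
    intro v hv hvX hvY
    set ε : ℝ := IF.inf' hIFne (fun i => ub i / (1 + |v i|)) with hεdef
    have hε : 0 < ε := by
      rw [hεdef, Finset.lt_inf'_iff]
      intro i hi
      exact div_pos (hubpos i hi) (by positivity)
    have hnn : ∀ i, 0 ≤ ub i + ε * v i := by
      intro i
      by_cases hi : i ∈ Iset pX pY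
      · have hle : ε ≤ ub i / (1 + |v i|) :=
          Finset.inf'_le _ (by simp [hIF, hi])
        have h2 : ε * (1 + |v i|) ≤ ub i := by
          rw [div_eq_mul_inv] at hle
          have : (0:ℝ) < 1 + |v i| := by positivity
          calc ε * (1 + |v i|) ≤ ub i * (1 + |v i|)⁻¹ * (1 + |v i|) := by
                nlinarith
            _ = ub i := by field_simp
        have h3 : -|v i| ≤ v i := neg_abs_le _
        nlinarith [abs_nonneg (v i)]
      · have := hv i hi
        have := hub0 i
        nlinarith
    have hmem : (fun i => ub i + ε * v i) ∈ Uset pX pY := by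
      refine ⟨hnn, ?_, ?_⟩
      · have hsplit : (∑ i, (ub i + ε * v i) / pX i)
            = (∑ i, ub i / pX i) + ε * ∑ i, v i / pX i := by
          rw [Finset.mul_sum, ← Finset.sum_add_distrib]
          exact Finset.sum_congr rfl fun i _ => by ring
        rw [hsplit, hubX]
        nlinarith
      · have hsplit : (∑ i, (ub i + ε * v i) / pY i)
            = (∑ i, ub i / pY i) + ε * ∑ i, v i / pY i := by
          rw [Finset.mul_sum, ← Finset.sum_add_distrib]
          exact Finset.sum_congr rfl fun i _ => by ring
        rw [hsplit, hubY]
        nlinarith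
    have hle := sum_le_emax hm0 pX pY hpX hpY hpXsum _ hmem
    have h2 : (∑ i, ub i) + ε * (∑ i, v i) ≤ (∑ i, ub i) := by
      calc (∑ i, ub i) + ε * (∑ i, v i) = ∑ i, (ub i + ε * v i) := by
            rw [Finset.mul_sum, ← Finset.sum_add_distrib]
        _ ≤ emax pX pY := hle
        _ = ∑ i, ub i := hubsum.symm
    by_contra hpos
    push_neg at hpos
    nlinarith
  -- solving the 2x2 system
  have Wex : ∀ a b : ℝ, ∃ w : Fin m → ℝ,
      (∀ i, i ≠ i1 → i ≠ j1 → w i = 0) ∧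
      (∑ i, w i / pX i) = a ∧ (∑ i, w i / pY i) = b := by
    intro a b
    set μ : ℝ := pX i1 * pY i1 * (a * pX j1 - b * pY j1) /
      (pX j1 * pY i1 - pX i1 * pY j1) with hμ
    set ρ : ℝ := pX j1 * pY j1 * (b * pY i1 - a * pX i1) /
      (pX j1 * pY i1 - pX i1 * pY j1) with hρ
    have hi1j1 : i1 ≠ j1 := fun hh => hj1ne hh.symm
    have key : ∀ (c : Fin m → ℝ),
        (∑ i, ((if i = i1 then μ else 0) + (if i = j1 then ρ else 0)) / c i)
          = μ / c i1 + ρ / c j1 := by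
      intro c
      have h1 : ∀ i, ((if i = i1 then μ else 0) + (if i = j1 then ρ else 0)) / c i
          = (if i = i1 then μ / c i1 else 0) + (if i = j1 then ρ / c j1 else 0) := by
        intro i
        by_cases h : i = i1
        · subst h; simp [hi1j1]
        · by_cases h2 : i = j1
          · subst h2; simp [h]
          · simp [h, h2]
      simp_rw [h1]
      rw [Finset.sum_add_distrib, Finset.sum_ite_eq', Finset.sum_ite_eq']
      simp
    refine ⟨fun i => (if i = i1 then μ else 0) + (if i = j1 then ρ else 0),
      fun i h1 h2 => by simp [h1, h2], ?_, ?_⟩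
    · rw [key pX, hμ, hρ]
      exact solve2x2_fst (pX i1) (pX j1) (pY i1) (pY j1) a b
        (hpX0 i1) (hpX0 j1) hD
    · rw [key pY, hμ, hρ]
      exact solve2x2_snd (pX i1) (pX j1) (pY i1) (pY j1) a b
        (hpY0 i1) (hpY0 j1) hD
  -- linear identity for I-supported vectors
  have A : ∀ v : Fin m → ℝ, (∀ i ∉ Iset pX pY, v i = 0) →
      (∑ i, v i) = s * (∑ i, v i / pX i) + t * (∑ i, v i / pY i) := by
    intro v hv
    rw [Finset.mul_sum, Finset.mul_sum, ← Finset.sum_add_distrib]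
    refine Finset.sum_congr rfl fun i _ => ?_
    by_cases hi : i ∈ Iset pX pY
    · linear_combination (-(v i)) * (hst i hi)
    · simp [hv i hi]
  -- s, t nonnegative
  have hwsupp0 : ∀ (w : Fin m → ℝ), (∀ i, i ≠ i1 → i ≠ j1 → w i = 0) →
      ∀ i ∉ Iset pX pY, w i = 0 := by
    intro w hw i hi
    refine hw i (fun h => hi (h ▸ hi1I)) (fun h => hi (h ▸ hj1I))
  have hs : 0 ≤ s := by
    obtain ⟨w, hw0, hwX, hwY⟩ := Wex (-1) 0
    have hsup := hwsupp0 w hw0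
    have hP := P w (fun i hi => (hsup i hi).ge) (by rw [hwX]; norm_num) (by rw [hwY])
    have hA := A w hsup
    rw [hwX, hwY] at hA
    linarith [hA, hP]
  have ht : 0 ≤ t := by
    obtain ⟨w, hw0, hwX, hwY⟩ := Wex 0 (-1)
    have hsup := hwsupp0 w hw0
    have hP := P w (fun i hi => (hsup i hi).ge) (by rw [hwX]) (by rw [hwY]; norm_num)
    have hA := A w hsup
    rw [hwX, hwY] at hA
    linarith [hA, hP]
  -- dual feasibility off I
  have hk : ∀ k, k ∉ Iset pX pY → 1 ≤ s / pX k + t / pY k := by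
    intro k hkI
    obtain ⟨w, hw0, hwX, hwY⟩ := Wex (-(1 / pX k)) (-(1 / pY k))
    have hsup := hwsupp0 w hw0
    set v : Fin m → ℝ := fun i => (if i = k then 1 else 0) + w i with hvdef
    have hvsum : ∀ (c : Fin m → ℝ), (∀ i, c i ≠ 0) → (∑ i, v i / c i)
        = 1 / c k + ∑ i, w i / c i := by
      intro c hc
      have : ∀ i, v i / c i = (if i = k then 1 / c i else 0) + w i / c i := by
        intro i
        by_cases h : i = k <;> simp [hvdef, h, add_div]
      simp_rw [this]
      rw [Finset.sum_add_distrib, Finset.sum_ite_eq']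
      simp
    have hvX : (∑ i, v i / pX i) ≤ 0 := by
      rw [hvsum pX hpX0, hwX]; ring_nf; norm_num
    have hvY : (∑ i, v i / pY i) ≤ 0 := by
      rw [hvsum pY hpY0, hwY]; ring_nf; norm_num
    have hvnn : ∀ i ∉ Iset pX pY, 0 ≤ v i := by
      intro i hi
      rw [hvdef]
      simp only
      rw [hsup i hi]
      by_cases h : i = k <;> simp [h]
    have hP := P v hvnn hvX hvY
    have hvtot : (∑ i, v i) = 1 + ∑ i, w i := by
      have : ∀ i, v i = (if i = k then 1 else 0) + w i := fun i => rfl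
      simp_rw [this]
      rw [Finset.sum_add_distrib, Finset.sum_ite_eq']
      simp
    have hA := A w hsup
    rw [hwX, hwY] at hA
    have : s * -(1 / pX k) + t * -(1 / pY k) = -(s / pX k + t / pY k) := by ring
    rw [this] at hA
    rw [hvtot, hA] at hP
    linarith
  have hi1j1' : i1 ≠ j1 := fun hh => hj1ne hh.symm
  -- target value over full index set
  set T' : ℝ := ∑ i, (s / pX i * ν.1 i + t / pY i * ν.2 i) with hT'
  have hTT : (∑ i ∈ IF, (s / pX i * ν.1 i + t / pY i * ν.2 i)) = T' := by
    rw [hT', hIF, Finset.sum_filter]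
    refine Finset.sum_congr rfl fun i _ => ?_
    by_cases hi : i ∈ Iset pX pY
    · simp [hi]
    · simp [hi, (hν i hi).1, (hν i hi).2]
  -- the sum identity
  have hSumId : ∀ xX xY : Fin m → ℝ, (∑ i, xX i) = 0 → (∑ i, xY i) = 0 →
      (∑ i, (s / pX i * (pX i * xX i + ν.1 i) + t / pY i * (pY i * xY i + ν.2 i)))
        = T' := by
    intro xX xY hX hY
    have h1 : ∀ i, s / pX i * (pX i * xX i + ν.1 i) + t / pY i * (pY i * xY i + ν.2 i)
        = s * xX i + t * xY i + (s / pX i * ν.1 i + t / pY i * ν.2 i) := by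
      intro i
      have h3 := hpX0 i
      have h4 := hpY0 i
      field_simp
      ring
    simp_rw [h1]
    rw [Finset.sum_add_distrib, Finset.sum_add_distrib, ← Finset.mul_sum,
      ← Finset.mul_sum, hX, hY, hT']
    ring
  -- upper bound
  have hupper : ∀ x : (Fin m → ℝ) × (Fin m → ℝ), x ∈ E'set pX pY ×ˢ E'set pX pY →
      (∑ i, min (pX i * x.1 i + ν.1 i) (pY i * x.2 i + ν.2 i)) ≤ T' := by
    rintro ⟨xX, xY⟩ ⟨⟨hXE, hXpos⟩, hYE, hYpos⟩
    have key : ∀ i, min (pX i * xX i + ν.1 i) (pY i * xY i + ν.2 i)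
        ≤ s / pX i * (pX i * xX i + ν.1 i) + t / pY i * (pY i * xY i + ν.2 i) := by
      intro i
      set a := pX i * xX i + ν.1 i with hadef
      set b := pY i * xY i + ν.2 i with hbdef
      have hα : 0 ≤ s / pX i := div_nonneg hs (hpX i).le
      have hβ : 0 ≤ t / pY i := div_nonneg ht (hpY i).le
      have hma := min_le_left a b
      have hmb := min_le_right a b
      have hp1 : 0 ≤ s / pX i * (a - min a b) :=
        mul_nonneg hα (sub_nonneg.mpr hma)
      have hp2 : 0 ≤ t / pY i * (b - min a b) :=
        mul_nonneg hβ (sub_nonneg.mpr hmb)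
      by_cases hi : i ∈ Iset pX pY
      · have h1 := hst i hi
        have hp3 : (s / pX i + t / pY i) * min a b = min a b := by
          rw [h1, one_mul]
        linarith
      · have ha : 0 ≤ a := by
          rw [hadef, (hν i hi).1, add_zero]
          exact mul_nonneg (hpX i).le (hXpos i hi)
        have hb : 0 ≤ b := by
          rw [hbdef, (hν i hi).2, add_zero]
          exact mul_nonneg (hpY i).le (hYpos i hi)
        have h1 := hk i hi
        have hm0' : 0 ≤ min a b := le_min ha hb
        have hp3 : 0 ≤ (s / pX i + t / pY i - 1) * min a b :=
          mul_nonneg (by linarith) hm0'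
        linarith
    calc (∑ i, min (pX i * xX i + ν.1 i) (pY i * xY i + ν.2 i))
        ≤ ∑ i, (s / pX i * (pX i * xX i + ν.1 i) + t / pY i * (pY i * xY i + ν.2 i)) :=
          Finset.sum_le_sum fun i _ => key i
      _ = T' := hSumId xX xY hXE hYE
  -- attainment
  set d : Fin m → ℝ := fun i => ν.2 i - ν.1 i with hd
  set C : ℝ := ∑ i, d i / pY i with hC
  have hD' : pX i1 * pY j1 - pX j1 * pY i1 ≠ 0 := sub_ne_zero.mpr hdet
  set aa : ℝ := C * pY i1 * pY j1 / (pX i1 * pY j1 - pX j1 * pY i1) with haa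
  set xX : Fin m → ℝ :=
    fun i => (if i = i1 then aa else 0) + (if i = j1 then -aa else 0) with hxX
  set xY : Fin m → ℝ := fun i => (pX i * xX i - d i) / pY i with hxY
  have hxXsum : (∑ i, xX i) = 0 := by
    have h1 : ∀ i, xX i = (if i = i1 then aa else 0) + (if i = j1 then -aa else 0) :=
      fun i => rfl
    rw [Finset.sum_congr rfl fun i _ => h1 i, Finset.sum_add_distrib,
      Finset.sum_ite_eq', Finset.sum_ite_eq']
    simp
  have hxXoff : ∀ i ∉ Iset pX pY, xX i = 0 := by
    intro i hi
    have h1 : i ≠ i1 := fun h => hi (h ▸ hi1I)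
    have h2 : i ≠ j1 := fun h => hi (h ▸ hj1I)
    simp [hxX, h1, h2]
  have hratio : (∑ i, (pX i * xX i) / pY i) = C := by
    have h1 : ∀ i, (pX i * xX i) / pY i
        = (if i = i1 then pX i1 * aa / pY i1 else 0)
          + (if i = j1 then pX j1 * (-aa) / pY j1 else 0) := by
      intro i
      by_cases h : i = i1
      · subst h; simp [hxX, hi1j1']
      · by_cases h2 : i = j1
        · subst h2; simp [hxX, hj1ne]
        · simp [hxX, h, h2]
    rw [Finset.sum_congr rfl fun i _ => h1 i, Finset.sum_add_distrib,
      Finset.sum_ite_eq', Finset.sum_ite_eq']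
    simp only [Finset.mem_univ, if_true]
    rw [haa]
    exact solveC (pX i1) (pX j1) (pY i1) (pY j1) C (hpY0 i1) (hpY0 j1) hD'
  have hxYsum : (∑ i, xY i) = 0 := by
    have h1 : ∀ i, xY i = (pX i * xX i) / pY i - d i / pY i := by
      intro i
      rw [show xY i = (pX i * xX i - d i) / pY i from rfl, sub_div]
    rw [Finset.sum_congr rfl fun i _ => h1 i, Finset.sum_sub_distrib, hratio, ← hC,
      sub_self]
  have hxYoff : ∀ i ∉ Iset pX pY, xY i = 0 := by
    intro i hi
    have h3 : d i = 0 := by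
      show ν.2 i - ν.1 i = 0
      rw [(hν i hi).1, (hν i hi).2, sub_zero]
    show (pX i * xX i - d i) / pY i = 0
    rw [hxXoff i hi, h3]
    simp
  have hab : ∀ i, pY i * xY i + ν.2 i = pX i * xX i + ν.1 i := by
    intro i
    have h1 : pY i * xY i = pX i * xX i - d i := by
      rw [show xY i = (pX i * xX i - d i) / pY i from rfl, mul_div_assoc',
        mul_div_cancel_left₀ _ (hpY0 i)]
    have h2 : d i = ν.2 i - ν.1 i := rfl
    rw [h1, h2]
    ring
  have hval : ∀ i, min (pX i * xX i + ν.1 i) (pY i * xY i + ν.2 i)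
      = s / pX i * (pX i * xX i + ν.1 i) + t / pY i * (pY i * xY i + ν.2 i) := by
    intro i
    rw [hab i, min_self]
    by_cases hi : i ∈ Iset pX pY
    · linear_combination (-(pX i * xX i + ν.1 i)) * (hst i hi)
    · have h0 : pX i * xX i + ν.1 i = 0 := by
        rw [hxXoff i hi, (hν i hi).1, mul_zero, add_zero]
      rw [h0]
      ring
  have hvalue : (∑ i, min (pX i * xX i + ν.1 i) (pY i * xY i + ν.2 i)) = T' := by
    rw [Finset.sum_congr rfl fun i _ => hval i]
    exact hSumId xX xY hxXsum hxYsum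
  have hmemE : (xX, xY) ∈ E'set pX pY ×ˢ E'set pX pY :=
    ⟨⟨hxXsum, fun i hi => (hxXoff i hi).ge⟩, ⟨hxYsum, fun i hi => (hxYoff i hi).ge⟩⟩
  have hgoal : mfrak pX pY ν = T' := by
    unfold mfrak
    refine IsGreatest.csSup_eq ⟨⟨(xX, xY), hmemE, hvalue⟩, ?_⟩
    rintro y ⟨x, hx, rfl⟩
    exact hupper x hx
  rw [hgoal]
  exact hTT.symm

end
end

section
/- There exist indices i, j ∈ {1,…,m} and λ = (λ^X,λ^Y) ∈ K_{Λ²} such that λ^X_k = λ^Y_k = 0 for all k ∉ {i,j}. (Two letters suffice to reach the maximum of f.) -/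
open MeasureTheory ProbabilityTheory Filter Finset Topology

noncomputable section

attribute [local instance] Classical.propDecidable

section TwoLettersAux

variable {m : ℕ} {pX pY : Fin m → ℝ}

lemma tl_sum_three {i j k : Fin m} (hij : i ≠ j) (hik : i ≠ k) (hjk : j ≠ k)
    (F : Fin m → ℝ) (hF : ∀ l, l ≠ i → l ≠ j → l ≠ k → F l = 0) :
    ∑ l, F l = F i + F j + F k := by
  rw [← Finset.sum_subset (Finset.subset_univ ({i, j, k} : Finset (Fin m)))]
  · rw [Finset.sum_insert (by simp [hij, hik]), Finset.sum_insert (by simp [hjk]),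
      Finset.sum_singleton, add_assoc]
  · intro x _ hx
    simp only [Finset.mem_insert, Finset.mem_singleton, not_or] at hx
    exact hF x hx.1 hx.2.1 hx.2.2

lemma tl_zero_mem : (0 : Fin m → ℝ) ∈ Uset pX pY := by
  refine ⟨fun i => le_rfl, ?_, ?_⟩ <;> simp [Uset]

lemma tl_U_compact (hpX : ∀ i, 0 < pX i) : IsCompact (Uset pX pY) := by
  apply IsCompact.of_isClosed_subset
    (isCompact_univ_pi (fun i => isCompact_Icc (a := (0:ℝ)) (b := pX i)))
  · have h1 : IsClosed {u : Fin m → ℝ | ∀ i, 0 ≤ u i} := by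
      have he : {u : Fin m → ℝ | ∀ i, 0 ≤ u i} = ⋂ i, {u : Fin m → ℝ | 0 ≤ u i} := by
        ext; simp
      rw [he]
      exact isClosed_iInter fun i => isClosed_le continuous_const (continuous_apply i)
    have h2 : IsClosed {u : Fin m → ℝ | (∑ i, u i / pX i) ≤ 1} :=
      isClosed_le (continuous_finset_sum _ fun i _ => (continuous_apply i).div_const _)
        continuous_const
    have h3 : IsClosed {u : Fin m → ℝ | (∑ i, u i / pY i) ≤ 1} :=
      isClosed_le (continuous_finset_sum _ fun i _ => (continuous_apply i).div_const _)
        continuous_const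
    exact h1.inter (h2.inter h3)
  · intro u hu
    refine Set.mem_univ_pi.2 fun i => ?_
    refine ⟨hu.1 i, ?_⟩
    have hterm : u i / pX i ≤ 1 := by
      refine le_trans ?_ hu.2.1
      exact Finset.single_le_sum (f := fun l => u l / pX l)
        (fun l _ => div_nonneg (hu.1 l) (hpX l).le) (Finset.mem_univ i)
    exact (div_le_one (hpX i)).1 hterm

lemma tl_reduce (hpX : ∀ i, 0 < pX i) (hpY : ∀ i, 0 < pY i)
    (u : Fin m → ℝ) (hu : u ∈ Uset pX pY)
    (hmax : IsMaxOn (fun v => ∑ i, v i) (Uset pX pY) u)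
    (h3 : 2 < (Finset.univ.filter (fun l => u l ≠ 0)).card) :
    ∃ u' ∈ Uset pX pY, IsMaxOn (fun v => ∑ i, v i) (Uset pX pY) u' ∧
      (Finset.univ.filter (fun l => u' l ≠ 0)).card <
        (Finset.univ.filter (fun l => u l ≠ 0)).card := by
  obtain ⟨i, j, k, hi, hj, hk, hij, hik, hjk⟩ := Finset.two_lt_card_iff.1 h3
  rw [Finset.mem_filter] at hi hj hk
  -- a kernel direction d supported on {i,j,k}
  have key : ∃ d : Fin m → ℝ, d ≠ 0 ∧ (∀ l, l ≠ i → l ≠ j → l ≠ k → d l = 0) ∧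
      (∑ l, d l / pX l) = 0 ∧ (∑ l, d l / pY l) = 0 := by
    by_cases hc : (pX i)⁻¹ * (pY j)⁻¹ - (pX j)⁻¹ * (pY i)⁻¹ = 0
    · refine ⟨fun l => if l = i then (pX j)⁻¹ else if l = j then -(pX i)⁻¹ else 0,
        ?_, ?_, ?_, ?_⟩
      · intro h
        have h' := congrFun h i
        simp only [if_pos rfl, Pi.zero_apply] at h'
        exact (inv_pos.2 (hpX j)).ne' h'
      · intro l hli hlj _; simp [hli, hlj]
      · rw [tl_sum_three hij hik hjk]
        · beta_reduce
          rw [if_pos rfl, if_neg (Ne.symm hij), if_pos rfl, if_neg (Ne.symm hik),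
            if_neg (Ne.symm hjk)]
          rw [div_eq_mul_inv, div_eq_mul_inv, zero_div]
          ring
        · intro l hli hlj _; simp [hli, hlj]
      · rw [tl_sum_three hij hik hjk]
        · beta_reduce
          rw [if_pos rfl, if_neg (Ne.symm hij), if_pos rfl, if_neg (Ne.symm hik),
            if_neg (Ne.symm hjk)]
          rw [div_eq_mul_inv, div_eq_mul_inv, zero_div]
          linear_combination -hc
        · intro l hli hlj _; simp [hli, hlj]
    · refine ⟨fun l => if l = i then (pX j)⁻¹ * (pY k)⁻¹ - (pX k)⁻¹ * (pY j)⁻¹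
        else if l = j then (pX k)⁻¹ * (pY i)⁻¹ - (pX i)⁻¹ * (pY k)⁻¹
        else if l = k then (pX i)⁻¹ * (pY j)⁻¹ - (pX j)⁻¹ * (pY i)⁻¹ else 0,
        ?_, ?_, ?_, ?_⟩
      · intro h
        have h' := congrFun h k
        simp only [if_neg (Ne.symm hik), if_neg (Ne.symm hjk), if_pos rfl,
          Pi.zero_apply] at h'
        exact hc h'
      · intro l hli hlj hlk; simp [hli, hlj, hlk]
      · rw [tl_sum_three hij hik hjk]
        · beta_reduce
          rw [if_pos rfl, if_neg (Ne.symm hij), if_pos rfl, if_neg (Ne.symm hik),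
            if_neg (Ne.symm hjk), if_pos rfl]
          rw [div_eq_mul_inv, div_eq_mul_inv, div_eq_mul_inv]
          ring
        · intro l hli hlj hlk; simp [hli, hlj, hlk]
      · rw [tl_sum_three hij hik hjk]
        · beta_reduce
          rw [if_pos rfl, if_neg (Ne.symm hij), if_pos rfl, if_neg (Ne.symm hik),
            if_neg (Ne.symm hjk), if_pos rfl]
          rw [div_eq_mul_inv, div_eq_mul_inv, div_eq_mul_inv]
          ring
        · intro l hli hlj hlk; simp [hli, hlj, hlk]
  -- normalize so that the total sum of d is nonnegative
  obtain ⟨d, hdne, hdsupp, hdX, hdY⟩ := key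
  have key2 : ∃ d : Fin m → ℝ, d ≠ 0 ∧ (∀ l, l ≠ i → l ≠ j → l ≠ k → d l = 0) ∧
      (∑ l, d l / pX l) = 0 ∧ (∑ l, d l / pY l) = 0 ∧ 0 ≤ ∑ l, d l := by
    rcases le_or_gt 0 (∑ l, d l) with h | h
    · exact ⟨d, hdne, hdsupp, hdX, hdY, h⟩
    · refine ⟨fun l => -(d l), ?_, ?_, ?_, ?_, ?_⟩
      · intro hh
        apply hdne
        funext l
        have := congrFun hh l
        simpa using this
      · intro l h1 h2 h3'; simp [hdsupp l h1 h2 h3']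
      · simp only [neg_div]
        rw [Finset.sum_neg_distrib, hdX, neg_zero]
      · simp only [neg_div]
        rw [Finset.sum_neg_distrib, hdY, neg_zero]
      · rw [Finset.sum_neg_distrib]
        linarith
  clear hdne hdsupp hdX hdY
  obtain ⟨d, hdne, hdsupp, hdX, hdY, hdsum⟩ := key2
  -- d has a negative coordinate
  have hdneg : ∃ l, d l < 0 := by
    by_contra hcon
    push_neg at hcon
    apply hdne
    funext l
    have h0 : ∀ l ∈ Finset.univ, 0 ≤ d l / pX l :=
      fun l _ => div_nonneg (hcon l) (hpX l).le
    have := (Finset.sum_eq_zero_iff_of_nonneg h0).1 hdX l (Finset.mem_univ l)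
    have hne : pX l ≠ 0 := (hpX l).ne'
    field_simp at this
    simpa using this
  -- positivity of u on the support of d
  have hdu : ∀ l, d l ≠ 0 → 0 < u l := by
    intro l hdl
    by_contra hul
    push_neg at hul
    have hul0 : u l = 0 := le_antisymm hul (hu.1 l)
    have : l = i ∨ l = j ∨ l = k := by
      by_contra hcc
      push_neg at hcc
      exact hdl (hdsupp l hcc.1 hcc.2.1 hcc.2.2)
    rcases this with rfl | rfl | rfl
    · exact hi.2 hul0
    · exact hj.2 hul0
    · exact hk.2 hul0
  -- pick the step size
  set T : Finset (Fin m) := Finset.univ.filter (fun l => d l < 0) with hT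
  have hTne : T.Nonempty := by
    obtain ⟨l, hl⟩ := hdneg
    exact ⟨l, by simp [hT, hl]⟩
  obtain ⟨l0, hl0T, hl0min⟩ := T.exists_min_image (fun l => u l / (-(d l))) hTne
  have hl0d : d l0 < 0 := (Finset.mem_filter.1 hl0T).2
  have hl0u : 0 < u l0 := hdu l0 hl0d.ne
  set t : ℝ := u l0 / (-(d l0)) with ht
  have htpos : 0 < t := div_pos hl0u (by linarith)
  set u' : Fin m → ℝ := fun l => u l + t * d l with hu'
  have hnn : ∀ l, 0 ≤ u' l := by
    intro l
    rcases le_or_gt 0 (d l) with h | h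
    · have : 0 ≤ t * d l := mul_nonneg htpos.le h
      simp only [hu']
      linarith [hu.1 l]
    · have hlT : l ∈ T := by simp [hT, h]
      have hmin := hl0min l hlT
      have hpos : 0 < -(d l) := by linarith
      have : t * (-(d l)) ≤ u l := by
        rw [← le_div_iff₀ hpos] at *
        exact le_trans hmin (le_refl _)
      simp only [hu']
      nlinarith
  have hsplit : ∀ p : Fin m → ℝ, (∀ l, 0 < p l) →
      (∑ l, u' l / p l) = (∑ l, u l / p l) + t * (∑ l, d l / p l) := by
    intro p hp
    rw [Finset.mul_sum, ← Finset.sum_add_distrib]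
    refine Finset.sum_congr rfl fun l _ => ?_
    simp only [hu']
    field_simp
  have hXc : (∑ l, u' l / pX l) ≤ 1 := by
    rw [hsplit pX hpX, hdX]
    simpa using hu.2.1
  have hYc : (∑ l, u' l / pY l) ≤ 1 := by
    rw [hsplit pY hpY, hdY]
    simpa using hu.2.2
  have hu'U : u' ∈ Uset pX pY := ⟨hnn, hXc, hYc⟩
  have hsum' : (∑ l, u l) ≤ ∑ l, u' l := by
    have : (∑ l, u' l) = (∑ l, u l) + t * (∑ l, d l) := by
      rw [Finset.mul_sum, ← Finset.sum_add_distrib]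
    rw [this]
    nlinarith
  have hmax' : IsMaxOn (fun v => ∑ i, v i) (Uset pX pY) u' := by
    intro v hv
    exact le_trans (hmax hv) hsum'
  refine ⟨u', hu'U, hmax', ?_⟩
  apply Finset.card_lt_card
  constructor
  · intro l hl
    rw [Finset.mem_filter] at hl ⊢
    refine ⟨Finset.mem_univ l, ?_⟩
    intro hul0
    apply hl.2
    have hdl0 : d l = 0 := by
      by_contra hdl
      exact (hdu l hdl).ne' hul0
    simp [hu', hul0, hdl0]
  · intro hsub
    have hl0mem : l0 ∈ Finset.univ.filter (fun l => u l ≠ 0) := by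
      simp [hl0u.ne']
    have := hsub hl0mem
    rw [Finset.mem_filter] at this
    apply this.2
    have hdl0ne : -(d l0) ≠ 0 := by linarith
    simp only [hu', ht]
    field_simp
    simp [div_self hl0d.ne]
lemma tl_exists_small (hpX : ∀ i, 0 < pX i) (hpY : ∀ i, 0 < pY i) :
    ∃ u ∈ Uset pX pY, IsMaxOn (fun v => ∑ i, v i) (Uset pX pY) u ∧
      (Finset.univ.filter (fun l => u l ≠ 0)).card ≤ 2 := by
  obtain ⟨u, huU, humax⟩ := (tl_U_compact (pY := pY) hpX).exists_isMaxOn ⟨0, tl_zero_mem⟩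
    ((continuous_finset_sum _ fun i _ => continuous_apply i).continuousOn)
  suffices H : ∀ n : ℕ, ∀ u ∈ Uset pX pY, IsMaxOn (fun v => ∑ i, v i) (Uset pX pY) u →
      (Finset.univ.filter (fun l => u l ≠ 0)).card ≤ n →
      ∃ u' ∈ Uset pX pY, IsMaxOn (fun v => ∑ i, v i) (Uset pX pY) u' ∧
        (Finset.univ.filter (fun l => u' l ≠ 0)).card ≤ 2 by
    exact H _ u huU humax le_rfl
  intro n
  induction n with
  | zero => intro u hu hm hc; exact ⟨u, hu, hm, le_trans hc (by norm_num)⟩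
  | succ n ih =>
    intro u hu hm hc
    by_cases hle : (Finset.univ.filter (fun l => u l ≠ 0)).card ≤ 2
    · exact ⟨u, hu, hm, hle⟩
    · push_neg at hle
      obtain ⟨u', hu'U, hu'max, hu'card⟩ := tl_reduce hpX hpY u hu hm hle
      exact ih u' hu'U hu'max (by omega)

end TwoLettersAux
/-- **Lemma 1.5**: two letters suffice to reach the maximum of `f`: there exist
`i, j ∈ {1,…,m}` and a maximizer `λ ∈ K_{Λ²}` supported on `{i, j}`. -/
theorem two_letters_suffice
    (m : ℕ) (hm : 2 ≤ m)
    (pX pY : Fin m → ℝ)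
    (hpX : ∀ i, 0 < pX i) (hpY : ∀ i, 0 < pY i)
    (hpXsum : ∑ i, pX i = 1) (hpYsum : ∑ i, pY i = 1) :
    ∃ i j : Fin m, ∃ l ∈ Kset pX pY,
      ∀ k, k ≠ i → k ≠ j → l.1 k = 0 ∧ l.2 k = 0 := by
  obtain ⟨u, huU, humax, hucard⟩ := tl_exists_small (pX := pX) (pY := pY) hpX hpY
  -- the support of `u` is contained in two indices
  have hsupp : ∃ i j : Fin m, ∀ l, u l ≠ 0 → l = i ∨ l = j := by
    set s := Finset.univ.filter (fun l => u l ≠ 0) with hs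
    rcases s.eq_empty_or_nonempty with he | hne
    · refine ⟨⟨0, by omega⟩, ⟨0, by omega⟩, fun l hl => ?_⟩
      exfalso
      have : l ∈ s := by simp [hs, hl]
      simp [he] at this
    · obtain ⟨i, hi⟩ := hne
      rcases (s.erase i).eq_empty_or_nonempty with he | hne2
      · refine ⟨i, i, fun l hl => ?_⟩
        have hls : l ∈ s := by simp [hs, hl]
        by_contra hc
        push_neg at hc
        have : l ∈ s.erase i := Finset.mem_erase.2 ⟨hc.1, hls⟩
        simp [he] at this
      · obtain ⟨j, hj⟩ := hne2
        refine ⟨i, j, fun l hl => ?_⟩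
        have hls : l ∈ s := by simp [hs, hl]
        by_cases hli : l = i
        · exact Or.inl hli
        · right
          have h1 : (s.erase i).card ≤ 1 := by
            have := Finset.card_erase_of_mem hi
            omega
          exact Finset.card_le_one.1 h1 l (Finset.mem_erase.2 ⟨hli, hls⟩) j hj
  obtain ⟨i, j, hsupp⟩ := hsupp
  -- every value of `fobj` on `Λ²` is at most `∑ u`
  have hbound : ∀ z ∈ fobj pX pY '' (Lam m ×ˢ Lam m), z ≤ ∑ l, u l := by
    rintro z ⟨⟨x, y⟩, hxy, rfl⟩
    have hx : x ∈ Lam m := hxy.1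
    have hy : y ∈ Lam m := hxy.2
    have hu0U : (fun l => min (pX l * x l) (pY l * y l)) ∈ Uset pX pY := by
      refine ⟨fun l => le_min (mul_nonneg (hpX l).le (hx.1 l))
        (mul_nonneg (hpY l).le (hy.1 l)), ?_, ?_⟩
      · calc (∑ l, min (pX l * x l) (pY l * y l) / pX l) ≤ ∑ l, x l := by
              refine Finset.sum_le_sum fun l _ => ?_
              rw [div_le_iff₀ (hpX l)]
              calc min (pX l * x l) (pY l * y l) ≤ pX l * x l := min_le_left _ _
                _ = x l * pX l := mul_comm _ _
          _ = 1 := hx.2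
      · calc (∑ l, min (pX l * x l) (pY l * y l) / pY l) ≤ ∑ l, y l := by
              refine Finset.sum_le_sum fun l _ => ?_
              rw [div_le_iff₀ (hpY l)]
              calc min (pX l * x l) (pY l * y l) ≤ pY l * y l := min_le_right _ _
                _ = y l * pY l := mul_comm _ _
          _ = 1 := hy.2
    have h := humax hu0U
    simpa [fobj] using h
  -- build a two-letter element of `Λ²` from `u`
  set lX : Fin m → ℝ :=
    fun l => (if l = i then 1 - ∑ l', u l' / pX l' else 0) + u l / pX l with hlX
  set lY : Fin m → ℝ :=
    fun l => (if l = i then 1 - ∑ l', u l' / pY l' else 0) + u l / pY l with hlY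
  have hsX : 0 ≤ 1 - ∑ l', u l' / pX l' := by linarith [huU.2.1]
  have hsY : 0 ≤ 1 - ∑ l', u l' / pY l' := by linarith [huU.2.2]
  have hlXLam : lX ∈ Lam m := by
    constructor
    · intro l
      apply add_nonneg
      · split
        · exact hsX
        · exact le_rfl
      · exact div_nonneg (huU.1 l) (hpX l).le
    · rw [hlX]
      rw [Finset.sum_add_distrib]
      simp only [Finset.sum_ite_eq', Finset.mem_univ, if_pos]
      ring
  have hlYLam : lY ∈ Lam m := by
    constructor
    · intro l
      apply add_nonneg
      · split
        · exact hsY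
        · exact le_rfl
      · exact div_nonneg (huU.1 l) (hpY l).le
    · rw [hlY]
      rw [Finset.sum_add_distrib]
      simp only [Finset.sum_ite_eq', Finset.mem_univ, if_pos]
      ring
  have hXge : ∀ l, u l ≤ pX l * lX l := by
    intro l
    have hite : (0:ℝ) ≤ (if l = i then 1 - ∑ l', u l' / pX l' else 0) := by
      split
      · exact hsX
      · exact le_rfl
    calc u l = pX l * (u l / pX l) := by field_simp [(hpX l).ne']
      _ ≤ pX l * lX l := by
          apply mul_le_mul_of_nonneg_left _ (hpX l).le
          rw [hlX]
          simp only []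
          linarith
  have hYge : ∀ l, u l ≤ pY l * lY l := by
    intro l
    have hite : (0:ℝ) ≤ (if l = i then 1 - ∑ l', u l' / pY l' else 0) := by
      split
      · exact hsY
      · exact le_rfl
    calc u l = pY l * (u l / pY l) := by field_simp [(hpY l).ne']
      _ ≤ pY l * lY l := by
          apply mul_le_mul_of_nonneg_left _ (hpY l).le
          rw [hlY]
          simp only []
          linarith
  have hge : (∑ l, u l) ≤ fobj pX pY (lX, lY) := by
    refine Finset.sum_le_sum fun l _ => ?_
    exact le_min (hXge l) (hYge l)
  have hmemP : (lX, lY) ∈ Lam m ×ˢ Lam m := ⟨hlXLam, hlYLam⟩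
  have hne : (fobj pX pY '' (Lam m ×ˢ Lam m)).Nonempty :=
    ⟨_, Set.mem_image_of_mem _ hmemP⟩
  have hbdd : BddAbove (fobj pX pY '' (Lam m ×ˢ Lam m)) :=
    ⟨∑ l, u l, fun z hz => hbound z hz⟩
  have h1 : emax pX pY ≤ ∑ l, u l := csSup_le hne hbound
  have h2 : fobj pX pY (lX, lY) ≤ emax pX pY :=
    le_csSup hbdd (Set.mem_image_of_mem _ hmemP)
  have heq : fobj pX pY (lX, lY) = emax pX pY :=
    le_antisymm h2 (le_trans h1 hge)
  refine ⟨i, j, (lX, lY), ⟨hmemP, heq⟩, ?_⟩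
  intro k hk1 hk2
  have hul : u k = 0 := by
    by_contra h
    rcases hsupp k h with rfl | rfl
    · exact hk1 rfl
    · exact hk2 rfl
  constructor
  · show lX k = 0
    simp [hlX, hk1, hul]
  · show lY k = 0
    simp [hlY, hk1, hul]

end
end
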